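/- Let E be a finite-dimensional real inner product space, U ⊆ E an open convex set, and f : U → ℝ a differentiable strictly convex function; define the Bregman divergence D_f(x, y) = f(x) − f(y) − ⟨∇f(y), x − y⟩ for x, y ∈ U. Let μ be a Borel probability measure on U such that f is μ-integrable and the mean m = ∫ x dμ(x) lies in U. Then for every y ∈ U, ∫ D_f(x, y) dμ(x) ≥ ∫ D_f(x, m) dμ(x), with equality if and only if y = m. (In words: the mean of the distribution is the unique minimizer of expected Bregman-divergence loss, i.e., the Bayes estimator for any Bregman divergence is the posterior mean.) -/

import Mathlib

open MeasureTheory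
open scoped RealInnerProductSpace

section Aux

open AffineMap

private lemma fderiv_eq_inner_gradient' {E : Type*} [NormedAddCommGroup E]
    [InnerProductSpace ℝ E] [CompleteSpace E] (f : E → ℝ) (y v : E) :
    fderiv ℝ f y v = ⟪gradient f y, v⟫ := by
  rw [gradient, ← InnerProductSpace.toDual_apply_apply]
  simp

private lemma bregman_pos' {E : Type*} [NormedAddCommGroup E] [InnerProductSpace ℝ E]
    [CompleteSpace E]
    (U : Set E) (hUconv : Convex ℝ U)
    (f : E → ℝ) (hfdiff : ∀ x ∈ U, DifferentiableAt ℝ f x)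
    (hfconv : StrictConvexOn ℝ U f)
    {y z : E} (hy : y ∈ U) (hz : z ∈ U) (hne : y ≠ z) :
    0 < f z - f y - ⟪gradient f y, z - y⟫ := by
  set L : ℝ →ᵃ[ℝ] E := AffineMap.lineMap y z with hL
  set I : Set ℝ := L ⁻¹' U with hI
  have hIconv : Convex ℝ I := hUconv.affine_preimage L
  have hL0 : L (0:ℝ) = y := by simp [hL]
  have hL1 : L (1:ℝ) = z := by simp [hL]
  have h0 : (0 : ℝ) ∈ I := by simp [hI, hL0, hy]
  have h1 : (1 : ℝ) ∈ I := by simp [hI, hL1, hz]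
  have hLinj : Function.Injective L := lineMap_injective ℝ hne
  have hg : StrictConvexOn ℝ I (f ∘ L) := by
    refine ⟨hIconv, fun a ha b hb hab p q hp hq hpq => ?_⟩
    have hcomb : L (p • a + q • b) = p • L a + q • L b :=
      Convex.combo_affine_apply hpq
    simp only [Function.comp_apply, smul_eq_mul]
    rw [show p * a + q * b = (p • a + q • b : ℝ) by simp]
    rw [hcomb]
    exact hfconv.2 ha hb (fun h => hab (hLinj h)) hp hq hpq
  have hLd : HasDerivAt (fun t : ℝ => L t) (z - y) 0 := by
    have h : HasDerivAt (fun t : ℝ => t • (z - y) + y) ((1:ℝ) • (z - y)) 0 :=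
      ((hasDerivAt_id (0:ℝ)).smul_const (z - y)).add_const y
    simp only [one_smul] at h
    refine h.congr_of_eventuallyEq (Filter.Eventually.of_forall fun t => ?_)
    simp only [hL, lineMap_apply_module]
    module
  have hfd : HasDerivAt (f ∘ L) (fderiv ℝ f (L 0) (z - y)) 0 :=
    (hfdiff (L 0) (by rwa [hL0])).hasFDerivAt.comp_hasDerivAt 0 hLd
  rw [hL0, fderiv_eq_inner_gradient'] at hfd
  have hlt := hg.lt_slope_of_hasDerivAt h0 h1 one_pos hfd
  rw [slope_def_field] at hlt
  simp only [Function.comp_apply, hL0, hL1, sub_zero, div_one] at hlt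
  linarith

end Aux

/-- Let `f` be a differentiable strictly convex function on an open
convex subset `U` of a finite-dimensional real inner product space, with Bregman
divergence `D_f(x, y) = f(x) − f(y) − ⟪∇f(y), x − y⟫`. If `μ` is a Borel probability
measure on `U` with `f` integrable and mean `m = ∫ x dμ(x) ∈ U`, then for every `y ∈ U`,
`∫ D_f(x, y) dμ(x) ≥ ∫ D_f(x, m) dμ(x)`, with equality iff `y = m`: the mean is the
unique minimizer of expected Bregman loss. -/
theorem bregman_bayes_estimator_is_mean
    {E : Type*} [NormedAddCommGroup E] [InnerProductSpace ℝ E] [FiniteDimensional ℝ E]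
    [MeasurableSpace E] [BorelSpace E]
    (U : Set E) (hUopen : IsOpen U) (hUconv : Convex ℝ U)
    (f : E → ℝ) (hfdiff : ∀ x ∈ U, DifferentiableAt ℝ f x)
    (hfconv : StrictConvexOn ℝ U f)
    (D : E → E → ℝ)
    (hD : ∀ x y, D x y = f x - f y - ⟪gradient f y, x - y⟫)
    (μ : Measure E) [IsProbabilityMeasure μ] (hμU : μ Uᶜ = 0)
    (hfint : Integrable f μ) (hidint : Integrable id μ)
    (m : E) (hm : m = ∫ x, x ∂μ) (hmU : m ∈ U) :
    ∀ y ∈ U, (∫ x, D x m ∂μ) ≤ (∫ x, D x y ∂μ) ∧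
      ((∫ x, D x y ∂μ) = (∫ x, D x m ∂μ) ↔ y = m) := by
  -- integrability and value of the linear part
  have hinner : ∀ c : E, Integrable (fun x => (⟪c, x⟫ : ℝ)) μ := fun c => by
    simpa using (innerSL ℝ c).integrable_comp hidint
  have hinnerval : ∀ c : E, (∫ x, (⟪c, x⟫ : ℝ) ∂μ) = ⟪c, m⟫ := fun c => by
    rw [hm]
    simpa using ((innerSL ℝ c).integral_comp_comm hidint).symm ▸
      ((innerSL ℝ c).integral_comp_comm hidint)
  -- value of the expected loss
  have hval : ∀ y : E, (∫ x, D x y ∂μ) =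
      (∫ x, f x ∂μ) - f y - ⟪gradient f y, m - y⟫ := by
    intro y
    set c := gradient f y with hc
    have heq : (fun x => D x y) =
        fun x => (f x - f y) - ((⟪c, x⟫ : ℝ) - ⟪c, y⟫) := by
      funext x
      rw [hD, inner_sub_right]
    have h1 : Integrable (fun x => f x - f y) μ := hfint.sub (integrable_const _)
    have h2 : Integrable (fun x => (⟪c, x⟫ : ℝ) - ⟪c, y⟫) μ :=
      (hinner c).sub (integrable_const _)
    rw [heq, integral_sub h1 h2, integral_sub hfint (integrable_const _),
        integral_sub (hinner c) (integrable_const _), hinnerval c,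
        integral_const, integral_const]
    simp only [measure_univ, probReal_univ, ENNReal.toReal_one, one_smul, inner_sub_right]
  intro y hy
  have hdiff : (∫ x, D x y ∂μ) - (∫ x, D x m ∂μ) =
      f m - f y - ⟪gradient f y, m - y⟫ := by
    rw [hval y, hval m]
    simp only [sub_self, inner_zero_right]
    ring
  constructor
  · rcases eq_or_ne y m with rfl | hne
    · exact le_refl _
    · have := bregman_pos' U hUconv f hfdiff hfconv hy hmU hne
      linarith
  · constructor
    · intro heq
      by_contra hne
      have := bregman_pos' U hUconv f hfdiff hfconv hy hmU hne
      rw [heq, sub_self] at hdiff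
      linarith
    · rintro rfl
      rfl
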